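/- Let A be a countable type, μ₁ and μ₂ subdistributions on A, and ε ≥ 0 a real number. If there is an (ε, Eq)-approximate coupling of μ₁ and μ₂, where Eq = {(a,a) | a ∈ A} is the equality relation, then μ₁ a ≤ μ₂ a + ε for every a ∈ A. -/

import Mathlib

/-- `μ` is a subdistribution on a countable type: nonnegative, summable, total mass ≤ 1. -/
def IsSubDistr {A : Type*} [Countable A] (μ : A → ℝ) : Prop :=
  (∀ a, 0 ≤ μ a) ∧ Summable μ ∧ ∑' a, μ a ≤ 1

/-- Expectation of `X` with respect to `μ`. -/
noncomputable def expect {A : Type*} [Countable A] (μ X : A → ℝ) : ℝ :=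
  ∑' a, μ a * X a

/-- Monadic bind of subdistributions. -/
noncomputable def sdBind {A B : Type*} [Countable A] [Countable B]
    (μ : A → ℝ) (f : A → B → ℝ) : B → ℝ :=
  fun b => ∑' a, μ a * f a b

/-- Dirac (return) subdistribution. -/
def sdRet {A : Type*} [DecidableEq A] (a : A) : A → ℝ :=
  fun a' => if a' = a then 1 else 0

/-- The uniform subdistribution on `{0, …, N}`. -/
noncomputable def unifd (N : ℕ) : ℕ → ℝ :=
  fun n => if n ≤ N then 1 / (N + 1) else 0

/-- An `(ε, R)`-approximate coupling of `μ₁` and `μ₂` exists. -/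
def ARCoupl {A B : Type*} [Countable A] [Countable B]
    (μ₁ : A → ℝ) (μ₂ : B → ℝ) (ε : ℝ) (R : Set (A × B)) : Prop :=
  ∀ X : A → ℝ, ∀ Y : B → ℝ,
    (∀ a, 0 ≤ X a ∧ X a ≤ 1) → (∀ b, 0 ≤ Y b ∧ Y b ≤ 1) →
    (∀ a b, (a, b) ∈ R → X a ≤ Y b) →
    expect μ₁ X ≤ expect μ₂ Y + ε

theorem arcoupl_eq_pointwise {A : Type*} [Countable A]
    (μ₁ μ₂ : A → ℝ) (ε : ℝ)
    (hμ₁ : IsSubDistr μ₁) (hμ₂ : IsSubDistr μ₂) (hε : 0 ≤ ε)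
    (hR : ARCoupl μ₁ μ₂ ε {p : A × A | p.1 = p.2}) :
    ∀ a, μ₁ a ≤ μ₂ a + ε := by
  classical
  intro a
  have h := hR (fun a' => if a' = a then 1 else 0) (fun a' => if a' = a then 1 else 0)
    (by intro a'; by_cases h : a' = a <;> simp [h])
    (by intro a'; by_cases h : a' = a <;> simp [h])
    (by intro x y hxy; simp at hxy; simp [hxy])
  have key : ∀ μ : A → ℝ, expect μ (fun a' => if a' = a then 1 else 0) = μ a := by
    intro μ
    unfold expect
    rw [show (fun a' => μ a' * if a' = a then 1 else 0)
        = (fun a' => if a' = a then μ a else 0) by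
      funext a'; by_cases h : a' = a <;> simp [h]]
    exact tsum_ite_eq a (fun _ => μ a)
  rw [key, key] at h
  exact h
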